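/- Let a, b, c, d, e, f be real numbers and for t ∈ ℝ let A(t) = [[a,d,e],[d,b,f],[e,f,c+t]] (i.e., A(t) = B₁ + t·diag(0,0,1)). Let Γ(t) denote the discriminant of the characteristic polynomial of A(t). Then the coefficient of t⁴ in the polynomial Γ(t) equals (a−b)² + 4d². -/

import Mathlib

/-- The discriminant of a monic cubic polynomial `λ³ + p λ² + q λ + r`,
expressed through its coefficients. -/
noncomputable def cubicDiscrim (P : Polynomial ℝ) : ℝ :=
  let p := P.coeff 2
  let q := P.coeff 1
  let r := P.coeff 0
  18 * p * q * r - 4 * p ^ 3 * r + p ^ 2 * q ^ 2 - 4 * q ^ 3 - 27 * r ^ 2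

open Polynomial in
lemma charpoly_sym3 (a b c d e f : ℝ) :
    (!![a, d, e; d, b, f; e, f, c] : Matrix (Fin 3) (Fin 3) ℝ).charpoly =
      X^3 - C (a+b+c) * X^2 + C (a*b+a*c+b*c-d^2-e^2-f^2) * X
        - C (a*b*c + 2*d*e*f - a*f^2 - b*e^2 - c*d^2) := by
  rw [Matrix.charpoly, Matrix.det_fin_three]
  simp [Matrix.charmatrix_apply]
  ring_nf
  simp [map_ofNat]

/-- The coefficients (in `t`) of the discriminant of the cubic
`λ³ - (s+t) λ² + (q0+u·t) λ - (r0+dd·t)`. -/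
noncomputable def discCoeffs (s u q0 dd r0 : ℝ) : Fin 5 → ℝ :=
  ![(-27*r0^2 - 4*q0^3 + 18*s*q0*r0 + s^2*q0^2 - 4*s^3*r0),
    (-54*dd*r0 + 18*q0*r0 - 12*u*q0^2 + 18*s*q0*dd + 2*s*q0^2 + 18*s*u*r0 - 12*s^2*r0 + 2*s^2*u*q0 - 4*s^3*dd),
    (-27*dd^2 + 18*q0*dd + q0^2 + 18*u*r0 - 12*u^2*q0 - 12*s*r0 + 18*s*u*dd + 4*s*u*q0 - 12*s^2*dd + s^2*u^2),
    (-4*r0 + 18*u*dd + 2*u*q0 - 4*u^3 - 12*s*dd + 2*s*u^2),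
    (-4*dd + u^2)]

lemma disc_expand (s u q0 dd r0 t : ℝ) :
    18 * (s+t) * (q0+u*t) * (r0+dd*t) - 4 * (s+t)^3 * (r0+dd*t)
      + (s+t)^2 * (q0+u*t)^2 - 4 * (q0+u*t)^3 - 27 * (r0+dd*t)^2
    = ∑ i : Fin 5, discCoeffs s u q0 dd r0 i * t ^ (i : ℕ) := by
  simp [discCoeffs, Fin.sum_univ_five, show ((3:Fin 5):ℕ) = 3 from rfl, show ((4:Fin 5):ℕ) = 4 from rfl]
  ring

open Polynomial in
lemma cubicDiscrim_explicit (p q r : ℝ) :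
    cubicDiscrim (X^3 - C p * X^2 + C q * X - C r)
      = 18 * p * q * r - 4 * p^3 * r + p^2 * q^2 - 4 * q^3 - 27 * r^2 := by
  have h2 : (X^3 - C p * X^2 + C q * X - C r).coeff 2 = -p := by
    simp [coeff_one, Polynomial.coeff_C]
  have h1 : (X^3 - C p * X^2 + C q * X - C r).coeff 1 = q := by
    simp [coeff_one, Polynomial.coeff_C]
  have h0 : (X^3 - C p * X^2 + C q * X - C r).coeff 0 = -r := by
    simp [coeff_one, Polynomial.coeff_C]
  rw [cubicDiscrim]
  rw [h2, h1, h0]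
  ring

theorem discriminant_t4_coefficient
    (a b c d e f : ℝ)
    (A : ℝ → Matrix (Fin 3) (Fin 3) ℝ)
    (hA : ∀ t, A t = !![a, d, e; d, b, f; e, f, c + t])
    (Γ : ℝ → ℝ) (hΓ : ∀ t, Γ t = cubicDiscrim (A t).charpoly) :
    ∃ coeffs : Fin 5 → ℝ, coeffs 4 = (a - b) ^ 2 + 4 * d ^ 2 ∧
      ∀ t, Γ t = ∑ i : Fin 5, coeffs i * t ^ (i : ℕ) := by
  refine ⟨discCoeffs (a+b+c) (a+b) (a*b+a*c+b*c-d^2-e^2-f^2) (a*b-d^2)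
      (a*b*c + 2*d*e*f - a*f^2 - b*e^2 - c*d^2), ?_, fun t => ?_⟩
  · show -4*(a*b-d^2) + (a+b)^2 = _
    ring
  · rw [hΓ, hA, charpoly_sym3 a b (c+t) d e f, cubicDiscrim_explicit,
      show a+b+(c+t) = a+b+c+t from by ring,
      show a*b+a*(c+t)+b*(c+t)-d^2-e^2-f^2
        = (a*b+a*c+b*c-d^2-e^2-f^2) + (a+b)*t from by ring,
      show a*b*(c+t) + 2*d*e*f - a*f^2 - b*e^2 - (c+t)*d^2
        = (a*b*c + 2*d*e*f - a*f^2 - b*e^2 - c*d^2) + (a*b-d^2)*t from by ring,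
      disc_expand]
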